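/- For k-summand base-N addition with incoming carry c ∈ {0,…,k−1}, the conditional expectation of the outgoing carry C' = ⌊(d_1+⋯+d_k+c)/N⌋ (with d_i independent uniform on {0,…,N−1}) equals c/N + (k−1)(N−1)/(2N). -/

import Mathlib

open Finset

lemma nat_hermite (N r : ℕ) (hr : r < N) : ∑ i ∈ range N, (r + i) / N = r := by
  have h : ∀ i ∈ range N, (r + i) / N = if N - r ≤ i then 1 else 0 := by
    intro i hi
    rw [mem_range] at hi
    split_ifs with h
    · exact Nat.div_eq_of_lt_le (by omega) (by omega)
    · exact Nat.div_eq_of_lt (by omega)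
  rw [Finset.sum_congr rfl h, Finset.sum_ite, Finset.sum_const, Finset.sum_const]
  have : (range N).filter (fun i => N - r ≤ i) = Finset.Ico (N - r) N := by
    ext i; simp only [Finset.mem_filter, Finset.mem_range, Finset.mem_Ico]; omega
  rw [this]
  simp
  omega

lemma int_hermite (N : ℕ) (hN : 0 < N) (x : ℤ) :
    ∑ i ∈ range N, (x + i) / (N : ℤ) = x := by
  set r : ℕ := (x % N).toNat with hr
  have hrx : (r : ℤ) = x % N := by
    rw [hr]; exact Int.toNat_of_nonneg (Int.emod_nonneg x (by positivity))
  have hrN : r < N := by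
    have := Int.emod_lt_of_pos x (show (0:ℤ) < N by exact_mod_cast hN)
    omega
  have key : ∀ i ∈ range N, (x + i) / (N : ℤ) = ((r + i : ℕ) / N : ℕ) + x / N := by
    intro i hi
    have hx : x + i = ((r + i : ℕ) : ℤ) + (x / N) * N := by
      have hdm : x % (N:ℤ) + (N:ℤ) * (x / N) = x := Int.emod_add_mul_ediv x N
      push_cast [hrx]
      linarith
    rw [hx, Int.add_mul_ediv_right _ _ (by positivity : (N:ℤ) ≠ 0)]
    push_cast [Int.natCast_div]
    ring
  rw [Finset.sum_congr rfl key, Finset.sum_add_distrib, Finset.sum_const]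
  have : ∑ i ∈ range N, (((r + i : ℕ) / N : ℕ) : ℤ) = (r : ℤ) := by
    rw [← Nat.cast_sum]
    exact_mod_cast congrArg (Nat.cast : ℕ → ℤ) (nat_hermite N r hrN)
  rw [this]
  have hdm : x % (N:ℤ) + (N:ℤ) * (x / N) = x := Int.emod_add_mul_ediv x N
  simp only [nsmul_eq_mul, card_range]
  linarith [hrx]

lemma int_hermite_fin (N : ℕ) (hN : 0 < N) (x : ℤ) :
    ∑ a : Fin N, (x + (a : ℤ)) / (N : ℤ) = x := by
  rw [Fin.sum_univ_eq_sum_range (fun i : ℕ => (x + (i : ℤ)) / (N : ℤ))]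
  exact int_hermite N hN x

lemma sum_pi_succ (N m : ℕ) (f : (Fin (m+1) → Fin N) → ℤ) :
    ∑ d : Fin (m+1) → Fin N, f d
      = ∑ a : Fin N, ∑ p : Fin m → Fin N, f (Fin.cons a p) := by
  rw [← Equiv.sum_comp (Fin.consEquiv (fun _ => Fin N)) f, Fintype.sum_prod_type]
  rfl

lemma digit_sum_mul (N m : ℕ) :
    (∑ d : Fin m → Fin N, ∑ i, (d i : ℤ)) * N
      = m * (∑ a : Fin N, (a : ℤ)) * N ^ m := by
  induction m with
  | zero => simp
  | succ m ih =>
    rw [sum_pi_succ N m (fun d => ∑ i, (d i : ℤ))]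
    simp only [Fin.sum_univ_succ, Fin.cons_zero, Fin.cons_succ, Finset.sum_add_distrib, Finset.sum_const,
      Finset.card_univ, Fintype.card_pi, Fintype.card_fin, Finset.prod_const,
      Finset.card_fin, nsmul_eq_mul]
    push_cast
    have hA : ∑ x : Fin N, ((N:ℤ)^m * (x:ℤ)) = (N:ℤ)^m * ∑ a : Fin N, (a:ℤ) :=
      Finset.mul_sum _ _ _ |>.symm
    rw [hA]
    linear_combination (N:ℤ) * ih

lemma strip (N m : ℕ) (hN : 0 < N) (c : ℤ) :
    ∑ d : Fin (m+1) → Fin N, ((∑ i, (d i : ℤ)) + c) / (N : ℤ)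
      = ∑ d : Fin m → Fin N, ((∑ i, (d i : ℤ)) + c) := by
  rw [sum_pi_succ N m (fun d => ((∑ i, (d i : ℤ)) + c) / N), Finset.sum_comm]
  refine Finset.sum_congr rfl fun p _ => ?_
  simp only [Fin.sum_univ_succ, Fin.cons_zero, Fin.cons_succ]
  have h1 : ∀ a : Fin N, (((a:ℤ) + ∑ i, (p i : ℤ)) + c) / (N:ℤ)
      = (((∑ i, (p i : ℤ)) + c) + (a:ℤ)) / (N:ℤ) := by
    intro a; ring_nf
  rw [Finset.sum_congr rfl (fun a _ => h1 a)]
  exact int_hermite_fin N hN _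

lemma gaussZ (N : ℕ) (hN : 1 ≤ N) :
    (∑ a : Fin N, (a : ℤ)) * 2 = N * (N - 1) := by
  rw [Fin.sum_univ_eq_sum_range (fun i : ℕ => (i : ℤ))]
  have := Finset.sum_range_id_mul_two N
  have h2 : ((∑ i ∈ range N, i) * 2 : ℕ) = N * (N - 1) := this
  have := congrArg (Nat.cast : ℕ → ℤ) h2
  push_cast [Nat.cast_sub hN] at this
  linarith

/-- Expected outgoing carry: summing the outgoing carry `⌊(d₁+⋯+d_k+c)/N⌋` over all
`N^k` digit tuples gives `N^k · (c/N + (k−1)(N−1)/(2N))`; i.e. the conditional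
expectation of the outgoing carry given incoming carry `c` equals
`c/N + (k−1)(N−1)/(2N)`. -/
theorem expected_outgoing_carry (k N c : ℕ) (hk : 1 ≤ k) (hN : 2 ≤ N) (hc : c < k) :
    (∑ d : Fin k → Fin N, ((((∑ i, (d i : ℤ)) + (c : ℤ)) / (N : ℤ) : ℤ) : ℚ))
      = (N : ℚ) ^ k *
          ((c : ℚ) / N + ((k : ℚ) - 1) * ((N : ℚ) - 1) / (2 * N)) := by
  obtain ⟨m, rfl⟩ : ∃ m, k = m + 1 := ⟨k - 1, by omega⟩
  have hN0 : 0 < N := by omega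
  have hcast : (∑ d : Fin (m+1) → Fin N, ((((∑ i, (d i : ℤ)) + (c : ℤ)) / (N : ℤ) : ℤ) : ℚ))
      = (((∑ d : Fin (m+1) → Fin N, (((∑ i, (d i : ℤ)) + (c : ℤ)) / (N : ℤ))) : ℤ) : ℚ) := by
    push_cast
    rfl
  rw [hcast]
  have hstrip := strip N m hN0 (c : ℤ)
  rw [hstrip]
  rw [Finset.sum_add_distrib, Finset.sum_const, Finset.card_univ]
  simp only [Fintype.card_pi, Fintype.card_fin, Finset.prod_const, Finset.card_fin,
    nsmul_eq_mul]
  have hL := digit_sum_mul N m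
  have hN1 : 1 ≤ N := hN0
  have hG := gaussZ N hN1
  set L : ℤ := ∑ d : Fin m → Fin N, ∑ i, (d i : ℤ) with hLdef
  set A : ℤ := ∑ a : Fin N, (a : ℤ) with hAdef
  have hLQ : (L : ℚ) * N = m * A * N ^ m := by exact_mod_cast hL
  have hGQ : (A : ℚ) * 2 = N * (N - 1) := by exact_mod_cast hG
  have hNQ : (N : ℚ) ≠ 0 := by positivity
  push_cast
  field_simp
  linear_combination 2*hLQ + (m:ℚ)*(N:ℚ)^m*hGQ
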